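/- Let P be a non-convex simple closed quadrilateral (4-gon) in ℝ². Then the polygonal diameter of the exterior of P is at most 2; in fact ext P is the union of three convex open sets, each two of which have a point in common. -/

import Mathlib

open Set Metric

abbrev Plane := EuclideanSpace ℝ (Fin 2)

/-- The `i`-th edge of the closed polygon with vertex cycle `p`. -/
def polyEdge {n : ℕ} (p : ZMod n → Plane) (i : ZMod n) : Set Plane :=
  segment ℝ (p i) (p (i + 1))

/-- The union of the edges of the closed polygon with vertex cycle `p`. -/
def polyBody {n : ℕ} (p : ZMod n → Plane) : Set Plane :=
  ⋃ i, polyEdge p i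

/-- `p` is the vertex cycle of a simple closed `n`-gon: distinct vertices,
consecutive edges meet exactly in their common endpoint, non-consecutive edges
are disjoint. -/
structure IsSimplePolygon {n : ℕ} (p : ZMod n → Plane) : Prop where
  three_le : 3 ≤ n
  inj : Function.Injective p
  consec : ∀ i : ZMod n, polyEdge p i ∩ polyEdge p (i + 1) = {p (i + 1)}
  nonconsec : ∀ i j : ZMod n, j ≠ i → j ≠ i + 1 → i ≠ j + 1 →
    polyEdge p i ∩ polyEdge p j = ∅

/-- The union of the bounded connected components of the complement of `P`
(the Jordan interior of `P`). -/
def intP (P : Set Plane) : Set Plane :=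
  {x | x ∉ P ∧ Bornology.IsBounded (connectedComponentIn Pᶜ x)}

/-- The union of the unbounded connected components of the complement of `P`
(the Jordan exterior of `P`). -/
def extP (P : Set Plane) : Set Plane :=
  {x | x ∉ P ∧ ¬ Bornology.IsBounded (connectedComponentIn Pᶜ x)}

/-- There is a polygonal path of `k` segments from `a` to `b` inside `S`. -/
def PolyPath (S : Set Plane) (a b : Plane) (k : ℕ) : Prop :=
  ∃ x : Fin (k + 1) → Plane, x 0 = a ∧ x (Fin.last k) = b ∧
    ∀ i : Fin k, segment ℝ (x i.castSucc) (x i.succ) ⊆ S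

/-- The minimal number of segments of a polygonal path from `a` to `b` in `S`. -/
noncomputable def polyDist (S : Set Plane) (a b : Plane) : ℕ :=
  sInf {k | PolyPath S a b k}

/-- A ray is unbounded. -/
lemma ray_unbounded {q v : Plane} (h : q ≠ v) :
    ¬ Bornology.IsBounded (AffineMap.lineMap q v '' Set.Ici (1:ℝ)) := by
  intro hb
  obtain ⟨R, hR⟩ := isBounded_iff_forall_norm_le.mp hb
  have hd0 : 0 < ‖v - q‖ := by
    simpa [sub_eq_zero] using (sub_ne_zero.mpr h.symm)
  set d := ‖v - q‖ with hd
  set t := max 1 ((R + ‖q‖ + 1)/d) with ht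
  have ht1 : (1:ℝ) ≤ t := le_max_left _ _
  have key := hR (AffineMap.lineMap q v t) ⟨t, ht1, rfl⟩
  rw [AffineMap.lineMap_apply_module'] at key
  have h1 : ‖t • (v - q)‖ ≤ ‖t • (v - q) + q‖ + ‖q‖ := by
    calc ‖t • (v - q)‖ = ‖(t • (v - q) + q) - q‖ := by rw [add_sub_cancel_right]
    _ ≤ ‖t • (v - q) + q‖ + ‖q‖ := norm_sub_le _ _
  have h2 : ‖t • (v - q)‖ = t * d := by
    rw [norm_smul, Real.norm_eq_abs, abs_of_pos (lt_of_lt_of_le one_pos ht1)]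
  have h3 : (R + ‖q‖ + 1)/d ≤ t := le_max_right _ _
  rw [div_le_iff₀ hd0] at h3
  nlinarith
/-- Two-segment path through a common point of two convex subsets. -/
lemma polyPath_two {E S T : Set Plane} {a b m : Plane} (hS : Convex ℝ S) (hT : Convex ℝ T)
    (hSE : S ⊆ E) (hTE : T ⊆ E) (ha : a ∈ S) (hb : b ∈ T) (hmS : m ∈ S) (hmT : m ∈ T) :
    PolyPath E a b 2 := by
  refine ⟨![a, m, b], rfl, rfl, ?_⟩
  intro i
  fin_cases i
  · simpa using (hS.segment_subset ha hmS).trans hSE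
  · simpa using (hT.segment_subset hmT hb).trans hTE
set_option maxHeartbeats 1600000 in
theorem stmt13 (p : ZMod 4 → Plane) (hP : IsSimplePolygon p)
    (hnc : ∃ i : ZMod 4, p i ∈ interior (convexHull ℝ {p (i + 1), p (i + 2), p (i + 3)})) :
    (∀ a ∈ extP (polyBody p), ∀ b ∈ extP (polyBody p),
      ∃ k ≤ 2, PolyPath (extP (polyBody p)) a b k) ∧
    ∃ A B C : Set Plane, IsOpen A ∧ IsOpen B ∧ IsOpen C ∧
      Convex ℝ A ∧ Convex ℝ B ∧ Convex ℝ C ∧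
      extP (polyBody p) = A ∪ B ∪ C ∧
      (A ∩ B).Nonempty ∧ (A ∩ C).Nonempty ∧ (B ∩ C).Nonempty := by
  classical
  obtain ⟨i0, hr⟩ := hnc
  set r : Plane := p i0 with hrdef
  set va : Plane := p (i0+1) with hvadef
  set vb : Plane := p (i0+2) with hvbdef
  set vc : Plane := p (i0+3) with hvcdef
  have h34 : i0 + 3 + 1 = i0 := by
    have h4 : (3 : ZMod 4) + 1 = 0 := by decide
    rw [add_assoc, h4, add_zero]
  set vtx : Fin 3 → Plane := ![va, vb, vc] with hvtxdef
  have hrange : Set.range vtx = {va, vb, vc} := by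
    ext w; simp [hvtxdef, Matrix.range_cons, Matrix.range_empty]; tauto
  have hspan : affineSpan ℝ (Set.range vtx) = ⊤ := by
    rw [hrange, ← interior_convexHull_nonempty_iff_affineSpan_eq_top]
    exact ⟨r, hr⟩
  have hind : AffineIndependent ℝ vtx := by
    rw [affineIndependent_iff_le_finrank_vectorSpan ℝ vtx
      (by simp : Fintype.card (Fin 3) = 2 + 1),
      AffineSubspace.vectorSpan_eq_top_of_affineSpan_eq_top ℝ _ _ hspan]
    simp
  set B : AffineBasis (Fin 3) ℝ Plane := ⟨vtx, hind, hspan⟩ with hBdef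
  have hcoordv : ∀ i j : Fin 3, B.coord i (vtx j) = if i = j then 1 else 0 := by
    intro i j
    exact B.coord_apply i j
  have hVA0 : B.coord 0 va = 1 := by simpa [hvtxdef] using hcoordv 0 0
  have hVA1 : B.coord 1 va = 0 := by simpa [hvtxdef] using hcoordv 1 0
  have hVA2 : B.coord 2 va = 0 := by simpa [hvtxdef] using hcoordv 2 0
  have hVB0 : B.coord 0 vb = 0 := by simpa [hvtxdef] using hcoordv 0 1
  have hVB1 : B.coord 1 vb = 1 := by simpa [hvtxdef] using hcoordv 1 1
  have hVB2 : B.coord 2 vb = 0 := by simpa [hvtxdef] using hcoordv 2 1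
  have hVC0 : B.coord 0 vc = 0 := by simpa [hvtxdef] using hcoordv 0 2
  have hVC1 : B.coord 1 vc = 0 := by simpa [hvtxdef] using hcoordv 1 2
  have hVC2 : B.coord 2 vc = 1 := by simpa [hvtxdef] using hcoordv 2 2
  have hrin : ∀ j, 0 < B.coord j r := by
    have h1 : r ∈ interior (convexHull ℝ (Set.range ⇑B)) := by
      rw [show Set.range ⇑B = Set.range vtx from rfl, hrange]; exact hr
    rw [B.interior_convexHull] at h1
    exact h1
  set lam := B.coord 0 r with hlam
  set mu := B.coord 1 r with hmu
  set nu := B.coord 2 r with hnu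
  have hlam0 : 0 < lam := hrin 0
  have hmu0 : 0 < mu := hrin 1
  have hnu0 : 0 < nu := hrin 2
  have hsum : ∀ x : Plane, B.coord 0 x + B.coord 1 x + B.coord 2 x = 1 := by
    intro x
    have := B.sum_coord_apply_eq_one x
    rw [Fin.sum_univ_three] at this
    exact this
  have hsumr : lam + mu + nu = 1 := hsum r
  -- segment coordinates
  have hseg : ∀ u v x : Plane, x ∈ segment ℝ u v →
      ∃ t, 0 ≤ t ∧ t ≤ 1 ∧ ∀ j, B.coord j x = (1-t) * B.coord j u + t * B.coord j v := by
    intro u v x hx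
    rw [segment_eq_image_lineMap] at hx
    obtain ⟨t, ht, rfl⟩ := hx
    exact ⟨t, ht.1, ht.2, fun j => by
      rw [AffineMap.apply_lineMap, AffineMap.lineMap_apply_ring]⟩
  have hmem_seg : ∀ (u v x : Plane) (t : ℝ), 0 ≤ t → t ≤ 1 →
      B.coord 0 x = (1-t) * B.coord 0 u + t * B.coord 0 v →
      B.coord 1 x = (1-t) * B.coord 1 u + t * B.coord 1 v →
      B.coord 2 x = (1-t) * B.coord 2 u + t * B.coord 2 v → x ∈ segment ℝ u v := by
    intro u v x t ht0 ht1 h0 h1 h2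
    rw [segment_eq_image_lineMap]
    refine ⟨t, ⟨ht0, ht1⟩, ?_⟩
    refine B.ext_elem fun j => ?_
    rw [AffineMap.apply_lineMap, AffineMap.lineMap_apply_ring]
    fin_cases j
    · exact h0.symm
    · exact h1.symm
    · exact h2.symm
  -- decomposition of the body
  have hedge0 : polyEdge p i0 = segment ℝ r va := rfl
  have hedge1 : polyEdge p (i0+1) = segment ℝ va vb := by
    show segment ℝ (p (i0+1)) (p (i0+1+1)) = _
    rw [show i0+1+1 = i0+2 by ring]
  have hedge2 : polyEdge p (i0+2) = segment ℝ vb vc := by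
    show segment ℝ (p (i0+2)) (p (i0+2+1)) = _
    rw [show i0+2+1 = i0+3 by ring]
  have hedge3 : polyEdge p (i0+3) = segment ℝ vc r := by
    show segment ℝ (p (i0+3)) (p (i0+3+1)) = _
    rw [h34]
  have hbody : polyBody p
      = segment ℝ r va ∪ segment ℝ va vb ∪ segment ℝ vb vc ∪ segment ℝ vc r := by
    apply Set.Subset.antisymm
    · intro x hx
      rw [polyBody, mem_iUnion] at hx
      obtain ⟨j, hj⟩ := hx
      have h4 : ∀ u v : ZMod 4, v = u ∨ v = u + 1 ∨ v = u + 2 ∨ v = u + 3 := by decide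
      rcases h4 i0 j with h|h|h|h <;> subst h
      · exact Or.inl (Or.inl (Or.inl (hedge0 ▸ hj)))
      · exact Or.inl (Or.inl (Or.inr (hedge1 ▸ hj)))
      · exact Or.inl (Or.inr (hedge2 ▸ hj))
      · exact Or.inr (hedge3 ▸ hj)
    · intro x hx
      rw [polyBody, mem_iUnion]
      rcases hx with ((h|h)|h)|h
      exacts [⟨i0, hedge0 ▸ h⟩, ⟨i0+1, hedge1 ▸ h⟩, ⟨i0+2, hedge2 ▸ h⟩, ⟨i0+3, hedge3 ▸ h⟩]
  -- the nonnegative region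
  set TT := {x : Plane | 0 ≤ B.coord 0 x ∧ 0 ≤ B.coord 1 x ∧ 0 ≤ B.coord 2 x} with hTTdef
  have hTTconv : Convex ℝ TT :=
    ((convex_Ici (0:ℝ)).affine_preimage (B.coord 0)).inter
      (((convex_Ici (0:ℝ)).affine_preimage (B.coord 1)).inter
        ((convex_Ici (0:ℝ)).affine_preimage (B.coord 2)))
  have hrTT : r ∈ TT := ⟨hlam0.le, hmu0.le, hnu0.le⟩
  have hvaTT : va ∈ TT := by refine ⟨?_, ?_, ?_⟩ <;> simp [hVA0, hVA1, hVA2]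
  have hvbTT : vb ∈ TT := by refine ⟨?_, ?_, ?_⟩ <;> simp [hVB0, hVB1, hVB2]
  have hvcTT : vc ∈ TT := by refine ⟨?_, ?_, ?_⟩ <;> simp [hVC0, hVC1, hVC2]
  have hbodyTT : polyBody p ⊆ TT := by
    rw [hbody]
    exact union_subset (union_subset (union_subset
      (hTTconv.segment_subset hrTT hvaTT) (hTTconv.segment_subset hvaTT hvbTT))
      (hTTconv.segment_subset hvbTT hvcTT)) (hTTconv.segment_subset hvcTT hrTT)
  have hTTbdd : Bornology.IsBounded TT := by
    refine ((Set.finite_range ⇑B).isCompact_convexHull (𝕜 := ℝ) |>.isBounded).subset ?_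
    rw [B.convexHull_eq_nonneg_coord]
    intro x hx j
    fin_cases j
    · exact hx.1
    · exact hx.2.1
    · exact hx.2.2
  -- the three convex open sets
  set SA := {x : Plane | B.coord 2 x < 0} with hSAdef
  set SB := {x : Plane | B.coord 0 x < 0} with hSBdef
  set f1 : Plane →ᵃ[ℝ] ℝ := nu • B.coord 1 - mu • B.coord 2 with hf1def
  set f2 : Plane →ᵃ[ℝ] ℝ := lam • B.coord 1 - mu • B.coord 0 with hf2def
  have hf1x : ∀ x, f1 x = nu * B.coord 1 x - mu * B.coord 2 x := fun x => by
    simp [hf1def]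
  have hf2x : ∀ x, f2 x = lam * B.coord 1 x - mu * B.coord 0 x := fun x => by
    simp [hf2def]
  set SC := {x : Plane | f1 x < 0 ∧ f2 x < 0} with hSCdef
  have hcont : ∀ j, Continuous (B.coord j) := fun j => continuous_barycentric_coord B j
  have hSAopen : IsOpen SA := isOpen_Iio.preimage (hcont 2)
  have hSBopen : IsOpen SB := isOpen_Iio.preimage (hcont 0)
  have hSCopen : IsOpen SC :=
    (isOpen_Iio.preimage f1.continuous_of_finiteDimensional).inter
      (isOpen_Iio.preimage f2.continuous_of_finiteDimensional)
  have hSAconv : Convex ℝ SA := (convex_Iio (0:ℝ)).affine_preimage (B.coord 2)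
  have hSBconv : Convex ℝ SB := (convex_Iio (0:ℝ)).affine_preimage (B.coord 0)
  have hSCconv : Convex ℝ SC :=
    ((convex_Iio (0:ℝ)).affine_preimage f1).inter ((convex_Iio (0:ℝ)).affine_preimage f2)
  -- the closed cone and the positive region
  set CC := {x : Plane | f1 x ≤ 0 ∧ f2 x ≤ 0} with hCCdef
  have hCCclosed : IsClosed CC :=
    ((isClosed_le f1.continuous_of_finiteDimensional continuous_const)).inter
      ((isClosed_le f2.continuous_of_finiteDimensional continuous_const))
  set PP := {x : Plane | 0 < B.coord 0 x ∧ 0 < B.coord 1 x ∧ 0 < B.coord 2 x} with hPPdef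
  have hPPopen : IsOpen PP :=
    (isOpen_Ioi.preimage (hcont 0)).inter
      ((isOpen_Ioi.preimage (hcont 1)).inter (isOpen_Ioi.preimage (hcont 2)))
  -- the body is closed
  have hsegclosed : ∀ u v : Plane, IsClosed (segment ℝ u v) := by
    intro u v
    rw [← convexHull_pair]
    exact ((Set.toFinite _).isCompact_convexHull (𝕜 := ℝ)).isClosed
  have hbodyclosed : IsClosed (polyBody p) := by
    rw [hbody]
    exact (((hsegclosed _ _).union (hsegclosed _ _)).union (hsegclosed _ _)).union
      (hsegclosed _ _)
  clear_value PP CC SC f2 f1 SB SA TT nu mu lam B vtx vc vb va r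
  -- SC is disjoint from the body
  have hSCbody : ∀ x ∈ polyBody p, x ∉ SC := by
    rw [hbody]
    rintro x (((h|h)|h)|h) hxC <;>
      obtain ⟨t, ht0, ht1, hc⟩ := hseg _ _ _ h <;>
      rw [hSCdef, mem_setOf_eq, hf1x, hf2x, hc 0, hc 1, hc 2] at hxC
    · rw [hVA0, hVA1, hVA2, ← hlam, ← hmu, ← hnu] at hxC
      exact absurd hxC.1 (not_lt.mpr (le_of_eq (by ring)))
    · rw [hVA0, hVA1, hVA2, hVB0, hVB1, hVB2] at hxC
      refine absurd hxC.1 (not_lt.mpr ?_)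
      have h1 := mul_nonneg hnu0.le ht0
      clear * - h1
      nlinarith [h1]
    · rw [hVB0, hVB1, hVB2, hVC0, hVC1, hVC2] at hxC
      refine absurd hxC.2 (not_lt.mpr ?_)
      have h1 : (0:ℝ) ≤ 1 - t := by clear * - ht1; linarith
      have h2 := mul_nonneg hlam0.le h1
      clear * - h2
      nlinarith [h2]
    · rw [hVC0, hVC1, hVC2, ← hlam, ← hmu, ← hnu] at hxC
      exact absurd hxC.2 (not_lt.mpr (le_of_eq (by ring)))
  -- characterization of points that are neither in the body nor in W
  have hnotW : ∀ x : Plane, x ∉ polyBody p → x ∉ SA → x ∉ SB → x ∉ SC →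
      x ∈ PP ∧ x ∉ CC := by
    intro x hxb hxa hxbb hxc
    rw [hSAdef, mem_setOf_eq, not_lt] at hxa
    rw [hSBdef, mem_setOf_eq, not_lt] at hxbb
    have hxcs := hsum x
    have hx1 : 0 ≤ B.coord 1 x := by
      by_contra hb1
      push_neg at hb1
      refine hxc ?_
      rw [hSCdef, mem_setOf_eq, hf1x, hf2x]
      constructor
      · have h1 := mul_pos hnu0 (neg_pos.mpr hb1)
        have h2 := mul_nonneg hmu0.le hxa
        clear * - h1 h2
        nlinarith
      · have h1 := mul_pos hlam0 (neg_pos.mpr hb1)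
        have h2 := mul_nonneg hmu0.le hxbb
        clear * - h1 h2
        nlinarith
    have hx0 : 0 < B.coord 0 x := by
      rcases eq_or_lt_of_le hxbb with h0 | h0
      · exfalso
        refine hxb ?_
        rw [hbody]
        refine Or.inl (Or.inr ?_)
        refine hmem_seg vb vc x (B.coord 2 x) hxa (by clear * - hxcs h0 hx1; linarith) ?_ ?_ ?_
        · rw [hVB0, hVC0]; clear * - h0; linarith
        · rw [hVB1, hVC1]; clear * - hxcs h0; linarith
        · rw [hVB2, hVC2]; clear * - ; ring
      · exact h0
    have hx2 : 0 < B.coord 2 x := by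
      rcases eq_or_lt_of_le hxa with h0 | h0
      · exfalso
        refine hxb ?_
        rw [hbody]
        refine Or.inl (Or.inl (Or.inr ?_))
        refine hmem_seg va vb x (B.coord 1 x) hx1 (by clear * - hxcs h0 hxbb; linarith) ?_ ?_ ?_
        · rw [hVA0, hVB0]; clear * - hxcs h0; linarith
        · rw [hVA1, hVB1]; clear * - ; ring
        · rw [hVA2, hVB2]; clear * - h0; linarith
      · exact h0
    have hx1' : 0 < B.coord 1 x := by
      rcases eq_or_lt_of_le hx1 with h0 | h0
      · exfalso
        refine hxc ?_
        rw [hSCdef, mem_setOf_eq, hf1x, hf2x, ← h0]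
        constructor
        · have h1 := mul_pos hmu0 hx2
          clear * - h1
          nlinarith
        · have h1 := mul_pos hmu0 hx0
          clear * - h1
          nlinarith
      · exact h0
    refine ⟨by rw [hPPdef]; exact ⟨hx0, hx1', hx2⟩, fun hxCC => ?_⟩
    rw [hCCdef, mem_setOf_eq, hf1x, hf2x] at hxCC
    obtain ⟨hc1, hc2⟩ := hxCC
    have hnot : ¬ (f1 x < 0 ∧ f2 x < 0) := fun hh => hxc (by rw [hSCdef, mem_setOf_eq]; exact hh)
    rw [hf1x, hf2x] at hnot
    have h1e : nu * B.coord 1 x - mu * B.coord 2 x = 0 ∨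
        lam * B.coord 1 x - mu * B.coord 0 x = 0 := by
      by_contra hne
      push_neg at hne
      exact hnot ⟨lt_of_le_of_ne hc1 hne.1, lt_of_le_of_ne hc2 hne.2⟩
    set t := B.coord 1 x / mu with htdef
    have htpos : 0 < t := div_pos hx1' hmu0
    have htmu : t * mu = B.coord 1 x := by
      rw [htdef]; field_simp
    rcases h1e with he | he
    · -- x lies on the edge from r to va
      refine hxb ?_
      rw [hbody]
      refine Or.inl (Or.inl (Or.inl ?_))
      have e2co : t * nu = B.coord 2 x := by
        refine mul_left_cancel₀ hmu0.ne' ?_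
        linear_combination nu * htmu + he
      have hc0x : B.coord 0 x = 1 - t*mu - t*nu := by
        clear * - hxcs htmu e2co; linarith
      have h6 : lam * B.coord 1 x - mu * B.coord 0 x = mu * (t - 1) := by
        rw [hc0x, ← htmu]
        linear_combination (t*mu) * hsumr
      have ht1 : t ≤ 1 := by
        rw [h6] at hc2
        clear * - hc2 hmu0
        nlinarith
      have hx_seg : x ∈ segment ℝ va r :=
        hmem_seg va r x t htpos.le ht1
          (by rw [hVA0, ← hlam]; linear_combination hc0x - t * hsumr)
          (by rw [hVA1, ← hmu]; clear * - htmu; linarith)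
          (by rw [hVA2, ← hnu]; clear * - e2co; linarith)
      rw [segment_symm] at hx_seg
      exact hx_seg
    · -- x lies on the edge from vc to r
      refine hxb ?_
      rw [hbody]
      refine Or.inr ?_
      have e0co : t * lam = B.coord 0 x := by
        refine mul_left_cancel₀ hmu0.ne' ?_
        linear_combination lam * htmu + he
      have hc2x : B.coord 2 x = 1 - t*lam - t*mu := by
        clear * - hxcs htmu e0co; linarith
      have h6 : nu * B.coord 1 x - mu * B.coord 2 x = mu * (t - 1) := by
        rw [hc2x, ← htmu]
        linear_combination (t*mu) * hsumr
      have ht1 : t ≤ 1 := by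
        rw [h6] at hc1
        clear * - hc1 hmu0
        nlinarith
      exact hmem_seg vc r x t htpos.le ht1
        (by rw [hVC0, ← hlam]; clear * - e0co; linarith)
        (by rw [hVC1, ← hmu]; clear * - htmu; linarith)
        (by rw [hVC2, ← hnu]; linear_combination hc2x - t * hsumr)
  -- rays to infinity give unboundedness of components
  have hray : ∀ (s : Set Plane) (x q v : Plane), Convex ℝ s → s ⊆ (polyBody p)ᶜ → x ∈ s →
      q ≠ v → (AffineMap.lineMap q v '' Set.Ici (1:ℝ) ⊆ s) →
      ¬ Bornology.IsBounded (connectedComponentIn (polyBody p)ᶜ x) := by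
    intro s x q v hconv hsub hx hqv hrs hbd
    exact ray_unbounded hqv (hbd.subset (hrs.trans
      (hconv.isPreconnected.subset_connectedComponentIn hx hsub)))
  have hSAnb : SA ⊆ (polyBody p)ᶜ := by
    intro x hx hb
    rw [hSAdef, mem_setOf_eq] at hx
    have h1 := hbodyTT hb
    rw [hTTdef, mem_setOf_eq] at h1
    have h2 := h1.2.2
    clear * - hx h2; linarith
  have hSBnb : SB ⊆ (polyBody p)ᶜ := by
    intro x hx hb
    rw [hSBdef, mem_setOf_eq] at hx
    have h1 := hbodyTT hb
    rw [hTTdef, mem_setOf_eq] at h1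
    have h2 := h1.1
    clear * - hx h2; linarith
  have hSCnb : SC ⊆ (polyBody p)ᶜ := fun x hx hb => hSCbody x hb hx
  have hSAext : SA ⊆ extP (polyBody p) := by
    intro x hx
    have hx' := hx
    rw [hSAdef, mem_setOf_eq] at hx'
    refine ⟨hSAnb hx, hray SA x r x hSAconv hSAnb hx ?_ ?_⟩
    · intro he
      rw [← he, ← hnu] at hx'
      clear * - hx' hnu0; linarith
    · rintro y ⟨t, ht, rfl⟩
      rw [mem_Ici] at ht
      rw [hSAdef, mem_setOf_eq, AffineMap.apply_lineMap, AffineMap.lineMap_apply_ring, ← hnu]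
      clear * - hx' ht hnu0
      nlinarith
  have hSBext : SB ⊆ extP (polyBody p) := by
    intro x hx
    have hx' := hx
    rw [hSBdef, mem_setOf_eq] at hx'
    refine ⟨hSBnb hx, hray SB x r x hSBconv hSBnb hx ?_ ?_⟩
    · intro he
      rw [← he, ← hlam] at hx'
      clear * - hx' hlam0; linarith
    · rintro y ⟨t, ht, rfl⟩
      rw [mem_Ici] at ht
      rw [hSBdef, mem_setOf_eq, AffineMap.apply_lineMap, AffineMap.lineMap_apply_ring, ← hlam]
      clear * - hx' ht hlam0
      nlinarith
  set m : Plane := AffineMap.lineMap va vc (1/2 : ℝ) with hmdef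
  have hm0 : B.coord 0 m = 1/2 := by
    rw [hmdef, AffineMap.apply_lineMap, AffineMap.lineMap_apply_ring, hVA0, hVC0]; norm_num
  have hm1 : B.coord 1 m = 0 := by
    rw [hmdef, AffineMap.apply_lineMap, AffineMap.lineMap_apply_ring, hVA1, hVC1]; norm_num
  have hm2 : B.coord 2 m = 1/2 := by
    rw [hmdef, AffineMap.apply_lineMap, AffineMap.lineMap_apply_ring, hVA2, hVC2]; norm_num
  clear_value m
  have hvbm : vb ≠ m := by
    intro he
    rw [← he, hVB1] at hm1
    clear * - hm1; norm_num at hm1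
  have hSCray : AffineMap.lineMap vb m '' Set.Ici (1:ℝ) ⊆ SC := by
    rintro y ⟨t, ht, rfl⟩
    rw [mem_Ici] at ht
    rw [hSCdef, mem_setOf_eq, hf1x, hf2x]
    simp only [AffineMap.apply_lineMap, AffineMap.lineMap_apply_ring]
    rw [hVB0, hVB1, hVB2, hm0, hm1, hm2]
    have h1 : 0 ≤ (t-1) * nu := mul_nonneg (by clear * - ht; linarith) hnu0.le
    have h1' : 0 ≤ (t-1) * lam := mul_nonneg (by clear * - ht; linarith) hlam0.le
    have h2 : 0 < mu * t := mul_pos hmu0 (by clear * - ht; linarith)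
    constructor
    · clear * - h1 h2; nlinarith
    · clear * - h1' h2; nlinarith
  have hSCext : SC ⊆ extP (polyBody p) := fun x hx =>
    ⟨hSCnb hx, hray SC x vb m hSCconv hSCnb hx hvbm hSCray⟩
  -- the complement of the body is covered by the inner open region and W
  have hcover : (polyBody p)ᶜ ⊆ (PP ∩ CCᶜ ∩ (polyBody p)ᶜ) ∪ (SA ∪ SB ∪ SC) := by
    intro y hy
    by_cases h1 : y ∈ SA ∪ SB ∪ SC
    · exact Or.inr h1
    · rw [mem_union, mem_union] at h1
      push_neg at h1
      obtain ⟨hPP', hCC'⟩ := hnotW y hy h1.1.1 h1.1.2 h1.2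
      exact Or.inl ⟨⟨hPP', hCC'⟩, hy⟩
  have hdisj : Disjoint (PP ∩ CCᶜ ∩ (polyBody p)ᶜ) (SA ∪ SB ∪ SC) := by
    rw [Set.disjoint_left]
    rintro y ⟨⟨hyPP, hyCC⟩, hyb⟩ hyW
    rw [hPPdef, mem_setOf_eq] at hyPP
    rcases hyW with (hy | hy) | hy
    · rw [hSAdef, mem_setOf_eq] at hy
      have h1 := hyPP.2.2
      clear * - hy h1; linarith
    · rw [hSBdef, mem_setOf_eq] at hy
      have h1 := hyPP.1
      clear * - hy h1; linarith
    · refine hyCC ?_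
      rw [hSCdef, mem_setOf_eq] at hy
      rw [hCCdef, mem_setOf_eq]
      exact ⟨hy.1.le, hy.2.le⟩
  have hOopen : IsOpen (PP ∩ CCᶜ ∩ (polyBody p)ᶜ) :=
    (hPPopen.inter hCCclosed.isOpen_compl).inter hbodyclosed.isOpen_compl
  have hWopen : IsOpen (SA ∪ SB ∪ SC) := (hSAopen.union hSBopen).union hSCopen
  have hextW : extP (polyBody p) = SA ∪ SB ∪ SC := by
    apply Set.Subset.antisymm
    · rintro x ⟨hxb, hxu⟩
      by_contra hxW
      rw [mem_union, mem_union] at hxW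
      push_neg at hxW
      obtain ⟨hxPP, hxCC⟩ := hnotW x hxb hxW.1.1 hxW.1.2 hxW.2
      have hsubO : connectedComponentIn (polyBody p)ᶜ x ⊆ PP ∩ CCᶜ ∩ (polyBody p)ᶜ :=
        isPreconnected_connectedComponentIn.subset_left_of_subset_union hOopen hWopen hdisj
          ((connectedComponentIn_subset _ _).trans hcover)
          ⟨x, mem_connectedComponentIn hxb, ⟨⟨hxPP, hxCC⟩, hxb⟩⟩
      refine hxu (hTTbdd.subset (hsubO.trans ?_))
      intro y hy
      have h1 := hy.1.1
      rw [hPPdef, mem_setOf_eq] at h1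
      rw [hTTdef]
      exact ⟨h1.1.le, h1.2.1.le, h1.2.2.le⟩
    · intro x hx
      rcases hx with (h | h) | h
      exacts [hSAext h, hSBext h, hSCext h]
  -- common points of the three sets
  have hpt : ∀ w0 w1 w2 : ℝ, w0 + w1 + w2 = 1 →
      ∃ x : Plane, B.coord 0 x = w0 ∧ B.coord 1 x = w1 ∧ B.coord 2 x = w2 := by
    intro w0 w1 w2 hw
    refine ⟨Finset.univ.affineCombination ℝ ⇑B ![w0,w1,w2], ?_, ?_, ?_⟩ <;>
      rw [B.coord_apply_combination_of_mem (Finset.mem_univ _)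
        (by rw [Fin.sum_univ_three]; simpa using hw)] <;> simp
  obtain ⟨qAB, hq0, hq1, hq2⟩ := hpt (-1) 3 (-1) (by norm_num)
  have hqABA : qAB ∈ SA := by rw [hSAdef, mem_setOf_eq, hq2]; norm_num
  have hqABB : qAB ∈ SB := by rw [hSBdef, mem_setOf_eq, hq0]; norm_num
  obtain ⟨qAC, hp0, hp1, hp2⟩ := hpt (3 + mu/nu) (-(1 + mu/nu)) (-1) (by ring)
  have hqACA : qAC ∈ SA := by rw [hSAdef, mem_setOf_eq, hp2]; norm_num
  have hqACC : qAC ∈ SC := by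
    rw [hSCdef, mem_setOf_eq, hf1x, hf2x, hp0, hp1, hp2]
    have hdiv : nu * (mu/nu) = mu := by field_simp
    have hdivpos : 0 ≤ mu/nu := by positivity
    constructor
    · clear * - hdiv hnu0; nlinarith
    · have h1 := mul_nonneg hlam0.le hdivpos
      have h2 := mul_nonneg hmu0.le hdivpos
      clear * - h1 h2 hlam0 hmu0; nlinarith
  obtain ⟨qBC, hs0, hs1, hs2⟩ := hpt (-1) (-(mu/lam) - 1) (3 + mu/lam) (by ring)
  have hqBCB : qBC ∈ SB := by rw [hSBdef, mem_setOf_eq, hs0]; norm_num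
  have hqBCC : qBC ∈ SC := by
    rw [hSCdef, mem_setOf_eq, hf1x, hf2x, hs0, hs1, hs2]
    have hdiv : lam * (mu/lam) = mu := by field_simp
    have hdivpos : 0 ≤ mu/lam := by positivity
    constructor
    · have h1 := mul_nonneg hnu0.le hdivpos
      have h2 := mul_nonneg hmu0.le hdivpos
      clear * - h1 h2 hnu0 hmu0; nlinarith
    · clear * - hdiv hlam0; nlinarith
  constructor
  · intro x hx y hy
    refine ⟨2, by norm_num, ?_⟩
    rw [hextW] at hx hy
    rcases hx with (hx | hx) | hx <;> rcases hy with (hy | hy) | hy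
    · exact polyPath_two hSAconv hSAconv hSAext hSAext hx hy hx hx
    · exact polyPath_two hSAconv hSBconv hSAext hSBext hx hy hqABA hqABB
    · exact polyPath_two hSAconv hSCconv hSAext hSCext hx hy hqACA hqACC
    · exact polyPath_two hSBconv hSAconv hSBext hSAext hx hy hqABB hqABA
    · exact polyPath_two hSBconv hSBconv hSBext hSBext hx hy hx hx
    · exact polyPath_two hSBconv hSCconv hSBext hSCext hx hy hqBCB hqBCC
    · exact polyPath_two hSCconv hSAconv hSCext hSAext hx hy hqACC hqACA
    · exact polyPath_two hSCconv hSBconv hSCext hSBext hx hy hqBCC hqBCB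
    · exact polyPath_two hSCconv hSCconv hSCext hSCext hx hy hx hx
  · exact ⟨SA, SB, SC, hSAopen, hSBopen, hSCopen, hSAconv, hSBconv, hSCconv, hextW,
      ⟨qAB, hqABA, hqABB⟩, ⟨qAC, hqACA, hqACC⟩, ⟨qBC, hqBCB, hqBCC⟩⟩
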